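/- Assume the domain D satisfies condition (A), let w : [0,T] → ℝ^d be a continuous path of bounded variation with w(0) ∈ D̄, and assume the Skorohod problem for w has a solution (ξ, φ). Then the total variation of ξ satisfies ‖ξ‖_{[s,t]} ≤ 2(√2 + 1) ‖w‖_{[s,t]} for all 0 ≤ s ≤ t ≤ T. -/

import Mathlib

open MeasureTheory ProbabilityTheory Set Filter
open scoped RealInnerProductSpace ENNReal NNReal

noncomputable section

namespace RSDE

/-- Euclidean space `ℝ^d`. -/
abbrev E (d : ℕ) : Type := EuclideanSpace ℝ (Fin d)

/-- The set `𝒩_{x,r}` of inward unit normal vectors at `x` with radius `r`. -/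
def normalsR {d : ℕ} (D : Set (E d)) (x : E d) (r : ℝ) : Set (E d) :=
  {v | ‖v‖ = 1 ∧ Metric.ball (x - r • v) r ∩ D = ∅}

/-- The set `𝒩_x` of inward unit normal vectors at `x`. -/
def normals {d : ℕ} (D : Set (E d)) (x : E d) : Set (E d) :=
  ⋃ r ∈ Ioi (0 : ℝ), normalsR D x r

/-- Condition (A): uniform exterior sphere condition with constant `r₀`. -/
def CondA {d : ℕ} (D : Set (E d)) (r₀ : ℝ) : Prop :=
  0 < r₀ ∧ ∀ x ∈ frontier D,
    normals D x = normalsR D x r₀ ∧ (normalsR D x r₀).Nonempty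

/-- Condition (B), with constants `δ`, `β`. -/
def CondB {d : ℕ} (D : Set (E d)) (δ β : ℝ) : Prop :=
  0 < δ ∧ 1 ≤ β ∧ ∀ x ∈ frontier D, ∃ l : E d, ‖l‖ = 1 ∧
    ∀ y ∈ Metric.ball x δ ∩ frontier D, ∀ v ∈ normals D y, 1 / β ≤ ⟪l, v⟫

/-- A `C^k_b` map between normed spaces: `k` times continuously differentiable,
bounded together with all derivatives up to order `k`. -/
def Cb (k : ℕ) {α β : Type*} [NormedAddCommGroup α] [NormedSpace ℝ α]
    [NormedAddCommGroup β] [NormedSpace ℝ β] (f : α → β) : Prop :=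
  ContDiff ℝ k f ∧ ∀ i : ℕ, i ≤ k → ∃ M : ℝ, ∀ x, ‖iteratedFDeriv ℝ i f x‖ ≤ M

/-- Condition (C), with function `f` and constant `γ`. -/
def CondC {d : ℕ} (D : Set (E d)) (f : E d → ℝ) (γ : ℝ) : Prop :=
  0 < γ ∧ Cb 2 f ∧
    ∀ x ∈ frontier D, ∀ y ∈ closure D, ∀ v ∈ normals D x,
      0 ≤ ⟪y - x, v⟫ + (1 / γ) * ⟪gradient f x, v⟫ * ‖y - x‖ ^ 2

/-- Total variation `‖f‖_{[s,t]}` of a path on the interval `[s,t]`. -/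
def tv {α : Type*} [PseudoEMetricSpace α] (f : ℝ → α) (s t : ℝ) : ℝ :=
  (eVariationOn f (Icc s t)).toReal

/-- Oscillation `‖f‖_{∞,[s,t]} = max_{s ≤ u ≤ v ≤ t} |f u - f v|` of a path on `[s,t]`. -/
def osc {α : Type*} [NormedAddCommGroup α] (f : ℝ → α) (s t : ℝ) : ℝ :=
  ⨆ p : Icc s t × Icc s t, ‖f p.1 - f p.2‖

/-- Hölder seminorm `‖f‖_{ℋ,[s,t],θ}` of a path on `[s,t]`. -/
def hol {α : Type*} [NormedAddCommGroup α] (f : ℝ → α) (s t θ : ℝ) : ℝ :=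
  ⨆ p : {q : ℝ × ℝ // s ≤ q.1 ∧ q.1 < q.2 ∧ q.2 ≤ t},
    ‖f p.1.2 - f p.1.1‖ / (p.1.2 - p.1.1) ^ θ

/-- `(ξ, φ)` is a solution of the Skorohod problem on `D̄` for the path `w` on `[0,T]`:
`ξ` is continuous with values in `D̄`, `ξ = w + φ`, `φ` is of bounded variation, starts at `0`,
and is obtained by integrating inward unit normal vectors against the measure `d‖φ‖_{[0,·]}`,
which is carried by `{s : ξ s ∈ ∂D}`. -/
structure IsSkorohod {d : ℕ} (D : Set (E d)) (T : ℝ) (w ξ φ : ℝ → E d) : Prop where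
  cont_xi : ContinuousOn ξ (Icc 0 T)
  mem_closure : ∀ t ∈ Icc 0 T, ξ t ∈ closure D
  init : ξ 0 = w 0
  eq_add : ∀ t ∈ Icc 0 T, ξ t = w t + φ t
  cont_phi : ContinuousOn φ (Icc 0 T)
  bv_phi : BoundedVariationOn φ (Icc 0 T)
  init_phi : φ 0 = 0
  reflection : ∃ (μ : Measure ℝ) (nv : ℝ → E d), IsFiniteMeasure μ ∧
    (∀ t ∈ Icc 0 T, μ (Icc 0 t) = eVariationOn φ (Icc 0 t)) ∧
    (∀ t ∈ Icc 0 T, φ t = ∫ s in Icc 0 t, nv s ∂μ) ∧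
    (∀ᵐ s ∂μ, s ∈ Icc 0 T ∧ ξ s ∈ frontier D ∧ nv s ∈ normals D (ξ s))

/-- `B` is an `ℝ^n`-valued `ℱ_t`-Brownian motion under `P`. -/
structure IsBM {n : ℕ} {Ω : Type*} {mΩ : MeasurableSpace Ω} (P : Measure Ω)
    (F : Filtration ℝ mΩ) (B : ℝ → Ω → E n) : Prop where
  init : ∀ ω, B 0 ω = 0
  cont : ∀ ω, Continuous fun t => B t ω
  adapted : Adapted F B
  indep_increments : ∀ s t : ℝ, 0 ≤ s → s ≤ t →
    Indep (MeasurableSpace.comap (fun ω => B t ω - B s ω) inferInstance) (F s) P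
  gauss_coord : ∀ s t : ℝ, 0 ≤ s → s ≤ t → ∀ i : Fin n,
    P.map (fun ω => B t ω i - B s ω i) = gaussianReal 0 (Real.toNNReal (t - s))
  coord_indep : ∀ s t : ℝ, 0 ≤ s → s ≤ t →
    iIndepFun (m := fun _ : Fin n => (inferInstance : MeasurableSpace ℝ))
      (fun i ω => B t ω i - B s ω i) P

/-- `v` is the Riemann–Stieltjes integral `∫_s^t H(u) dw(u)`, defined as the limit of
Riemann sums along the uniform partitions of `[s,t]`. -/
def IsRSI {α β : Type*} [NormedAddCommGroup α] [NormedSpace ℝ α]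
    [NormedAddCommGroup β] [NormedSpace ℝ β]
    (H : ℝ → (α →L[ℝ] β)) (w : ℝ → α) (s t : ℝ) (v : β) : Prop :=
  Tendsto (fun N : ℕ => ∑ k ∈ Finset.range N,
      (H (s + (t - s) * k / N)) (w (s + (t - s) * (k + 1) / N) - w (s + (t - s) * k / N)))
    atTop (nhds v)

/-- Scalar Riemann–Stieltjes integral `∫_s^t h dw` along uniform partitions. -/
def IsRSreal (h w : ℝ → ℝ) (s t : ℝ) (v : ℝ) : Prop :=
  Tendsto (fun N : ℕ => ∑ k ∈ Finset.range N,
      h (s + (t - s) * k / N) * (w (s + (t - s) * (k + 1) / N) - w (s + (t - s) * k / N)))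
    atTop (nhds v)

/-- Riemann sum for the Itô integral `∫_0^t H dB` along the partition `t_k = tk/N`. -/
def itoSum {n d : ℕ} {Ω : Type*} (H : ℝ → Ω → (E n →L[ℝ] E d)) (B : ℝ → Ω → E n)
    (t : ℝ) (N : ℕ) (ω : Ω) : E d :=
  ∑ k ∈ Finset.range N, (H (t * k / N) ω) (B (t * (k + 1) / N) ω - B (t * k / N) ω)

/-- `I` is the Itô integral process `I(t) = ∫_0^t H(s) dB(s)`: for each `t ≥ 0` the Riemann
sums along the uniform partitions of `[0,t]` converge in probability to `I(t)`. -/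
def IsItoIntegral {n d : ℕ} {Ω : Type*} [MeasurableSpace Ω] (P : Measure Ω)
    (H : ℝ → Ω → (E n →L[ℝ] E d)) (B : ℝ → Ω → E n) (I : ℝ → Ω → E d) : Prop :=
  ∀ t : ℝ, 0 ≤ t → TendstoInMeasure P (fun N => itoSum H B t N) atTop (I t)

/-- `(X, Φ)` is a solution of the reflecting SDE `dX = σ(X) dB + b(X) dt + dΦ` on `D̄`
with initial condition `x`: `X, Φ` are `ℱ_t`-adapted and, almost surely, `(X, Φ)` solves
the Skorohod problem for `Y(t) = x + ∫_0^t σ(X) dB + ∫_0^t b(X) ds`. -/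
structure IsRSDE {n d : ℕ} {Ω : Type*} {mΩ : MeasurableSpace Ω} (P : Measure Ω)
    (F : Filtration ℝ mΩ) (B : ℝ → Ω → E n) (D : Set (E d))
    (σ : E d → (E n →L[ℝ] E d)) (b : E d → E d) (T : ℝ) (x : E d)
    (X Φ : ℝ → Ω → E d) : Prop where
  adapted_X : Adapted F X
  adapted_Φ : Adapted F Φ
  sol : ∃ I : ℝ → Ω → E d, IsItoIntegral P (fun s ω => σ (X s ω)) B I ∧
    ∀ᵐ ω ∂P, IsSkorohod D T
      (fun t => x + I t ω + ∫ s in (0:ℝ)..t, b (X s ω))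
      (fun t => X t ω) (fun t => Φ t ω)

/-- `(ξ, Φ)` is a solution of the reflecting ODE `dξ = σ(ξ) dw + b(ξ) dt + dΦ` on `D̄`
driven by the (bounded variation) path `w`, with initial condition `x`. -/
def IsRODE {n d : ℕ} (D : Set (E d)) (σ : E d → (E n →L[ℝ] E d)) (b : E d → E d)
    (T : ℝ) (x : E d) (w : ℝ → E n) (ξ Φ : ℝ → E d) : Prop :=
  ∃ I : ℝ → E d,
    (∀ t ∈ Icc 0 T, IsRSI (fun s => σ (ξ s)) w 0 t (I t)) ∧
    IsSkorohod D T (fun t => x + I t + ∫ s in (0:ℝ)..t, b (ξ s)) ξ Φ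

/-- The piecewise linear interpolation `B^N` of `B` at the points `t_k = kT/N`. -/
def plin {n : ℕ} {Ω : Type*} (T : ℝ) (N : ℕ) (B : ℝ → Ω → E n) (t : ℝ) (ω : Ω) : E n :=
  let k : ℕ := max 1 ⌈t * N / T⌉₊
  B (((k : ℝ) - 1) * T / N) ω +
    ((t - ((k : ℝ) - 1) * T / N) * N / T) •
      (B ((k : ℝ) * T / N) ω - B (((k : ℝ) - 1) * T / N) ω)

/-- `(X, Φ)` is the Wong–Zakai approximation of level `N`: for every `ω` it solves the
reflecting ODE driven by the piecewise linear interpolation `B^N`. -/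
def IsWZ {n d : ℕ} {Ω : Type*} (B : ℝ → Ω → E n) (D : Set (E d))
    (σ : E d → (E n →L[ℝ] E d)) (b : E d → E d) (T : ℝ) (x : E d) (N : ℕ)
    (X Φ : ℝ → Ω → E d) : Prop :=
  ∀ ω, IsRODE D σ b T x (fun t => plin T N B t ω) (fun t => X t ω) (fun t => Φ t ω)

/-- `π_N(t) = max {t_k = kT/N : t_k ≤ t}`. -/
def piN (T : ℝ) (N : ℕ) (t : ℝ) : ℝ := (⌊t * N / T⌋₊ : ℝ) * T / N

/-- The driving path `Y^N_E(t) = x + ∫_0^t σ(X_E(π_N(s))) dB(s) + ∫_0^t b(X_E(π_N(s))) ds`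
of the Euler–Peano scheme (the stochastic integral of the piecewise constant integrand is
the explicit finite sum). -/
def epDrive {n d : ℕ} {Ω : Type*} (B : ℝ → Ω → E n)
    (σ : E d → (E n →L[ℝ] E d)) (b : E d → E d) (T : ℝ) (x : E d) (N : ℕ)
    (XE : ℝ → Ω → E d) (t : ℝ) (ω : Ω) : E d :=
  x + (∑ k ∈ Finset.range N, (σ (XE ((k : ℝ) * T / N) ω))
        (B (min (((k : ℝ) + 1) * T / N) t) ω - B (min ((k : ℝ) * T / N) t) ω))
    + ∫ s in (0:ℝ)..t, b (XE (piN T N s) ω)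

/-- `(XE, ΦE)` is the Euler–Peano approximation of level `N` of the reflecting
SDE `(σ, b)` on `D̄` started at `x`. -/
def IsEulerPeano {n d : ℕ} {Ω : Type*} {mΩ : MeasurableSpace Ω} (P : Measure Ω)
    (F : Filtration ℝ mΩ) (B : ℝ → Ω → E n) (D : Set (E d))
    (σ : E d → (E n →L[ℝ] E d)) (b : E d → E d) (T : ℝ) (x : E d) (N : ℕ)
    (XE ΦE : ℝ → Ω → E d) : Prop :=
  Adapted F XE ∧ Adapted F ΦE ∧
    ∀ᵐ ω ∂P, IsSkorohod D T (fun t => epDrive B σ b T x N XE t ω)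
      (fun t => XE t ω) (fun t => ΦE t ω)

/-- The Wong–Zakai drift correction `½ tr (Dσ)(σ)`. -/
def driftCorr {n d : ℕ} (σ : E d → (E n →L[ℝ] E d)) (y : E d) : E d :=
  (1 / 2 : ℝ) • ∑ i : Fin n,
    (fderiv ℝ σ y ((σ y) (EuclideanSpace.single i 1))) (EuclideanSpace.single i 1)

/-- `M` is a continuous `ℱ_t`-local martingale (via a localizing sequence of
stopping times). -/
def IsLocalMartingale {Ω : Type*} {mΩ : MeasurableSpace Ω} (P : Measure Ω)
    (F : Filtration ℝ mΩ) (M : ℝ → Ω → ℝ) : Prop :=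
  ∃ τ : ℕ → Ω → ℝ, (∀ j, IsStoppingTime F (fun ω => ((τ j ω : ℝ) : WithTop ℝ))) ∧
    (∀ ω, Tendsto (fun j => τ j ω) atTop atTop) ∧
    ∀ j, Martingale (fun t ω => M (min (τ j ω) t) ω) F P

/-- `X` is a continuous `ℱ_t`-semimartingale on `[0,T]`. -/
def IsContSemimartingale {Ω : Type*} {mΩ : MeasurableSpace Ω} (P : Measure Ω)
    (F : Filtration ℝ mΩ) (T : ℝ) (X : ℝ → Ω → ℝ) : Prop :=
  Adapted F X ∧ (∀ ω, Continuous fun t => X t ω) ∧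
  ∃ M A : ℝ → Ω → ℝ, IsLocalMartingale P F M ∧ Adapted F A ∧
    (∀ ω, Continuous fun t => M t ω) ∧ (∀ ω, Continuous fun t => A t ω) ∧
    (∀ ω, BoundedVariationOn (fun t => A t ω) (Icc 0 T)) ∧
    ∀ t ω, X t ω = M t ω + A t ω

/-- The class `𝕊`: finite sums of products `Y(t)A(t)` of continuous semimartingales with
continuous bounded variation processes, with all relevant quantities in every `L^p`. -/
def MemS {Ω : Type*} {mΩ : MeasurableSpace Ω} (P : Measure Ω)
    (F : Filtration ℝ mΩ) (T : ℝ) (U : ℝ → Ω → ℝ) : Prop :=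
  ∃ (m : ℕ) (Y A : Fin m → ℝ → Ω → ℝ),
    (∀ i, IsContSemimartingale P F T (Y i)) ∧
    (∀ i ω, Continuous fun t => A i t ω) ∧
    (∀ i ω, BoundedVariationOn (fun t => A i t ω) (Icc 0 T)) ∧
    (∀ i, ∀ p : ℝ, 1 ≤ p →
      MemLp (fun ω => (⨆ t : Icc (0:ℝ) T, |Y i t ω|) + tv (fun t => A i t ω) 0 T)
        (ENNReal.ofReal p) P) ∧
    ∀ t ω, U t ω = ∑ i, Y i t ω * A i t ω

end RSDE

private lemma TVA_norm_one {d : ℕ} {D : Set (RSDE.E d)} {x v : RSDE.E d}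
    (h : v ∈ RSDE.normals D x) : ‖v‖ = 1 := by
  simp only [RSDE.normals, Set.mem_iUnion] at h
  obtain ⟨r, -, h1, -⟩ := h
  exact h1

private lemma TVA_sphere {d : ℕ} {D : Set (RSDE.E d)} {r₀ : ℝ} (hA : RSDE.CondA D r₀)
    {x v y : RSDE.E d} (hx : x ∈ frontier D) (hv : v ∈ RSDE.normals D x)
    (hy : y ∈ closure D) : -(‖y - x‖ ^ 2) ≤ 2 * r₀ * ⟪y - x, v⟫ := by
  obtain ⟨hr₀, hAx⟩ := hA
  have hv' : v ∈ RSDE.normalsR D x r₀ := (hAx x hx).1 ▸ hv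
  obtain ⟨hn, hball⟩ := hv'
  have hnb : y ∉ Metric.ball (x - r₀ • v) r₀ := by
    intro hyb
    obtain ⟨z, hz⟩ := (_root_.mem_closure_iff.1 hy) _ Metric.isOpen_ball hyb
    exact absurd hball (by
      rw [Set.eq_empty_iff_forall_notMem]
      push_neg
      exact ⟨z, hz.1, hz.2⟩)
  have hdist : r₀ ≤ ‖y - (x - r₀ • v)‖ := by
    have := Metric.mem_ball.not.1 hnb
    rw [dist_eq_norm] at this
    linarith [not_lt.1 this]
  have hexp : y - (x - r₀ • v) = (y - x) + r₀ • v := by abel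
  have h2 : r₀ ^ 2 ≤ ‖(y - x) + r₀ • v‖ ^ 2 := by
    rw [← hexp]
    have h0 : (0:ℝ) ≤ r₀ := le_of_lt hr₀
    nlinarith [norm_nonneg (y - (x - r₀ • v))]
  rw [norm_add_sq_real, real_inner_smul_right, norm_smul] at h2
  have : ‖r₀ • v‖ = r₀ := by
    rw [norm_smul, hn, Real.norm_eq_abs, abs_of_pos hr₀, mul_one]
  simp only [Real.norm_eq_abs, hn, mul_one, abs_of_pos hr₀] at h2
  nlinarith [h2]

private lemma TVA_chain {X : Type*} [PseudoEMetricSpace X] (f : ℝ → X) {q : ℕ → ℝ}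
    (hq : Monotone q) (n : ℕ) :
    ∑ i ∈ Finset.range n, eVariationOn f (Icc (q i) (q (i + 1))) ≤
      eVariationOn f (Icc (q 0) (q n)) := by
  induction n with
  | zero => simp
  | succ n ih =>
    rw [Finset.sum_range_succ]
    have hIcc : eVariationOn f (Icc (q 0) (q n)) + eVariationOn f (Icc (q n) (q (n + 1)))
        = eVariationOn f (Icc (q 0) (q (n + 1))) := by
      have := eVariationOn.Icc_add_Icc f (s := Set.univ) (hq (Nat.zero_le n)) (hq n.le_succ)
        (Set.mem_univ _)
      simpa using this
    calc ∑ i ∈ Finset.range n, eVariationOn f (Icc (q i) (q (i + 1)))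
          + eVariationOn f (Icc (q n) (q (n + 1)))
        ≤ eVariationOn f (Icc (q 0) (q n)) + eVariationOn f (Icc (q n) (q (n + 1))) := by
          gcongr
      _ = eVariationOn f (Icc (q 0) (q (n + 1))) := hIcc

private lemma TVA_sum_norm {d : ℕ} {f : ℝ → RSDE.E d} {u v : ℝ} {n : ℕ} {a : ℕ → ℝ}
    (hmono : Monotone a) (hmem : ∀ j, j ≤ n → a j ∈ Icc u v)
    (hfin : eVariationOn f (Icc u v) ≠ ⊤) :
    ∑ j ∈ Finset.range n, ‖f (a (j + 1)) - f (a j)‖ ≤ (eVariationOn f (Icc u v)).toReal := by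
  have hsum := eVariationOn.sum_le (f := f) (n := n) (u := fun j => a (min j n))
    (fun i j hij => hmono (min_le_min_right n hij))
    (fun i => hmem _ (min_le_right i n))
  have hcongr : ∀ j ∈ Finset.range n,
      edist (f (a (min (j + 1) n))) (f (a (min j n))) = ENNReal.ofReal ‖f (a (j+1)) - f (a j)‖ := by
    intro j hj
    rw [Finset.mem_range] at hj
    rw [min_eq_left hj, min_eq_left (le_of_lt hj), edist_dist, dist_eq_norm]
  rw [Finset.sum_congr rfl hcongr] at hsum
  rw [← ENNReal.ofReal_sum_of_nonneg (fun i _ => norm_nonneg _)] at hsum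
  exact (ENNReal.ofReal_le_iff_le_toReal hfin).1 hsum

private lemma TVA_sum_Ioc {μ : Measure ℝ} {a : ℕ → ℝ} (hmono : Monotone a) (n : ℕ) :
    ∑ j ∈ Finset.range n, μ (Ioc (a j) (a (j + 1))) = μ (Ioc (a 0) (a n)) := by
  induction n with
  | zero => simp
  | succ n ih =>
    rw [Finset.sum_range_succ, ih, ← measure_union ?_ measurableSet_Ioc,
      Set.Ioc_union_Ioc_eq_Ioc (hmono (Nat.zero_le n)) (hmono n.le_succ)]
    rw [Set.disjoint_left]
    intro b hb hb'
    exact absurd hb'.1 (not_lt.2 hb.2)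

private lemma TVA_muIoc {d : ℕ} {φ : ℝ → RSDE.E d} {T : ℝ} {μ : Measure ℝ}
    (hbv : BoundedVariationOn φ (Icc 0 T))
    (hμV : ∀ r ∈ Icc 0 T, μ (Icc 0 r) = eVariationOn φ (Icc 0 r))
    {x y : ℝ} (hx : 0 ≤ x) (hxy : x ≤ y) (hyT : y ≤ T) :
    μ (Ioc x y) = eVariationOn φ (Icc x y) := by
  have hdisj : Disjoint (Icc (0:ℝ) x) (Ioc x y) := by
    rw [Set.disjoint_left]
    intro b hb hb'
    exact absurd hb'.1 (not_lt.2 hb.2)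
  have h1 : μ (Icc 0 x) + μ (Ioc x y) = μ (Icc 0 y) := by
    rw [← measure_union hdisj measurableSet_Ioc, Set.Icc_union_Ioc_eq_Icc hx hxy]
  have h2 : eVariationOn φ (Icc 0 x) + eVariationOn φ (Icc x y) = eVariationOn φ (Icc 0 y) := by
    have := eVariationOn.Icc_add_Icc φ (s := Set.univ) hx hxy (Set.mem_univ _)
    simpa using this
  have hxT : x ≤ T := le_trans hxy hyT
  rw [hμV x ⟨hx, hxT⟩, hμV y ⟨le_trans hx hxy, hyT⟩, ← h2] at h1
  have hfx : eVariationOn φ (Icc 0 x) ≠ ⊤ :=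
    fun h => hbv (eq_top_iff.2 (h ▸ eVariationOn.mono φ (Icc_subset_Icc le_rfl hxT)))
  exact (ENNReal.add_right_inj hfx).1 h1

private lemma TVA_left_small {d : ℕ} {φ : ℝ → RSDE.E d} {T : ℝ}
    (hcont : ContinuousOn φ (Icc 0 T)) (hbv : BoundedVariationOn φ (Icc 0 T))
    {x : ℝ} (hx0 : 0 < x) (hxT : x ≤ T) {η : ℝ} (hη : 0 < η) :
    ∃ a, 0 ≤ a ∧ a < x ∧ eVariationOn φ (Icc a x) ≤ ENNReal.ofReal η := by
  classical
  set A := eVariationOn φ (Icc 0 x) with hA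
  have hAfin : A ≠ ⊤ := fun h =>
    hbv (eq_top_iff.2 (h ▸ eVariationOn.mono φ (Icc_subset_Icc le_rfl hxT)))
  by_cases hAη : A ≤ ENNReal.ofReal η
  · exact ⟨0, le_rfl, hx0, hAη⟩
  have hApos : A ≠ 0 :=
    fun h => hAη (h ▸ zero_le)
  -- continuity at x
  have hφx : ContinuousWithinAt φ (Icc 0 T) x := hcont x ⟨le_of_lt hx0, hxT⟩
  obtain ⟨δ, hδpos, hδ⟩ := Metric.continuousWithinAt_iff.1 hφx (η/4) (by linarith)
  -- a good partition
  have hlt : A - ENNReal.ofReal (η/2) < A :=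
    ENNReal.sub_lt_self hAfin hApos (by simp [ENNReal.ofReal_pos]; linarith)
  rw [hA] at hlt
  unfold eVariationOn at hlt
  obtain ⟨⟨n, ⟨q, hq, hqs⟩⟩, hsum⟩ := lt_iSup_iff.1 hlt
  simp only at hsum
  -- choose a
  set M := (Finset.range (n+1)).image q |>.filter (fun r => r < x) with hM
  set base := max (x - δ/2) 0 with hbase
  set aset := insert base M with haset
  have hne : aset.Nonempty := ⟨base, Finset.mem_insert_self _ _⟩
  set a := aset.max' hne with ha
  have ha_lt : a < x := by
    rw [ha, Finset.max'_lt_iff]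
    intro y hy
    rcases Finset.mem_insert.1 hy with h | h
    · rw [h, hbase]; exact max_lt (by linarith) hx0
    · exact (Finset.mem_filter.1 h).2
  have hbase_le : base ≤ a := Finset.le_max' _ _ (Finset.mem_insert_self _ _)
  have ha0 : 0 ≤ a := le_trans (le_max_right _ 0) hbase_le
  have haδ : x - δ/2 ≤ a := le_trans (le_max_left _ _) hbase_le
  have hqa : ∀ i, i ≤ n → q i < x → q i ≤ a := by
    intro i hi hlt'
    have hmem : q i ∈ aset := by
      refine Finset.mem_insert_of_mem ?_
      rw [hM]
      exact Finset.mem_filter.2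
        ⟨Finset.mem_image.2 ⟨i, Finset.mem_range.2 (Nat.lt_succ_of_le hi), rfl⟩, hlt'⟩
    exact Finset.le_max' aset (q i) hmem
  set e := edist (φ x) (φ a) with he_def
  have he : e ≤ ENNReal.ofReal (η/4) := by
    have haT : a ∈ Icc 0 T := ⟨ha0, le_trans (le_of_lt ha_lt) hxT⟩
    have hd : dist a x < δ := by
      rw [Real.dist_eq, abs_of_nonpos (by linarith)]
      linarith
    have := hδ haT hd
    rw [he_def, edist_dist, dist_comm]
    exact ENNReal.ofReal_le_ofReal (le_of_lt this)
  set q' : ℕ → ℝ := fun i => min (q i) a with hq'def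
  have hq' : Monotone q' := fun i j hij => min_le_min (hq hij) le_rfl
  have hq's : ∀ i, q' i ∈ Icc 0 a := fun i => ⟨le_min (hqs i).1 ha0, min_le_right _ _⟩
  set P : ℕ → Prop := fun i => q i ≤ a ∧ ¬ q (i+1) ≤ a with hP
  have hqx : ∀ i, i ≤ n → ¬ q i ≤ a → q i = x := by
    intro i hi h
    rcases lt_or_eq_of_le (hqs i).2 with h' | h'
    · exact absurd (hqa i hi h') h
    · exact h'
  have key : ∀ i ∈ Finset.range n, edist (φ (q (i+1))) (φ (q i)) ≤
      edist (φ (q' (i+1))) (φ (q' i)) + (if P i then e else 0) := by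
    intro i hi
    rw [Finset.mem_range] at hi
    by_cases h1 : q (i+1) ≤ a
    · have h0 : q i ≤ a := le_trans (hq i.le_succ) h1
      have hPi : ¬ P i := fun hp => hp.2 h1
      rw [if_neg hPi, add_zero, hq'def]
      simp only [min_eq_left h1, min_eq_left h0]
      exact le_rfl
    · have hx1 : q (i+1) = x := hqx (i+1) hi h1
      by_cases h0 : q i ≤ a
      · have hq'1 : q' (i+1) = a := by
          rw [hq'def]; simp only [hx1]; exact min_eq_right (le_of_lt ha_lt)
        have hq'0 : q' i = q i := min_eq_left h0
        rw [if_pos ⟨h0, h1⟩, hq'1, hq'0, hx1, he_def]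
        calc edist (φ x) (φ (q i)) ≤ edist (φ x) (φ a) + edist (φ a) (φ (q i)) :=
              edist_triangle _ _ _
          _ = edist (φ a) (φ (q i)) + edist (φ x) (φ a) := by rw [add_comm]
      · have hx0' : q i = x := hqx i (le_of_lt hi) h0
        have hz : edist (φ (q (i+1))) (φ (q i)) = 0 := by
          rw [hx1, hx0', edist_self]
        rw [hz]
        exact zero_le
  have hsumle : ∑ i ∈ Finset.range n, edist (φ (q (i+1))) (φ (q i)) ≤
      (∑ i ∈ Finset.range n, edist (φ (q' (i+1))) (φ (q' i)))
      + ∑ i ∈ Finset.range n, (if P i then e else 0) := by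
    rw [← Finset.sum_add_distrib]
    exact Finset.sum_le_sum key
  have hite : ∑ i ∈ Finset.range n, (if P i then e else 0) ≤ e := by
    rw [Finset.sum_ite, Finset.sum_const_zero, add_zero, Finset.sum_const]
    have hP2 : ∀ i ∈ (Finset.range n).filter P, ∀ j ∈ (Finset.range n).filter P,
        i < j → False := by
      intro i hi j hj hij
      simp only [Finset.mem_filter, Finset.mem_range] at hi hj
      exact hi.2.2 (le_trans (hq (Nat.succ_le_of_lt hij)) hj.2.1)
    have hcard : ((Finset.range n).filter P).card ≤ 1 := by
      refine Finset.card_le_one.2 (fun i hi j hj => ?_)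
      by_contra hne
      rcases Ne.lt_or_gt hne with h | h
      · exact hP2 i hi j hj h
      · exact hP2 j hj i hi h
    rcases Nat.le_one_iff_eq_zero_or_eq_one.1 hcard with h | h <;> simp [h]
  have hclamp : ∑ i ∈ Finset.range n, edist (φ (q' (i+1))) (φ (q' i)) ≤
      eVariationOn φ (Icc 0 a) := eVariationOn.sum_le (f := φ) (n := n) hq' hq's
  have hfa : eVariationOn φ (Icc 0 a) ≠ ⊤ := fun h =>
    hAfin (eq_top_iff.2 (h ▸ eVariationOn.mono φ (Icc_subset_Icc le_rfl (le_of_lt ha_lt))))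
  have hadd : eVariationOn φ (Icc 0 a) + eVariationOn φ (Icc a x) = A := by
    have := eVariationOn.Icc_add_Icc φ (s := Set.univ) ha0 (le_of_lt ha_lt) (Set.mem_univ _)
    simpa using this
  have hle2 : A - ENNReal.ofReal (η/2) ≤ eVariationOn φ (Icc 0 a) + ENNReal.ofReal (η/4) :=
    le_trans (le_of_lt hsum) (le_trans hsumle (add_le_add hclamp (le_trans hite he)))
  have hcη : ENNReal.ofReal (η/2) ≤ A :=
    le_trans (ENNReal.ofReal_le_ofReal (by linarith)) (le_of_lt (not_le.1 hAη))
  have hle3 : A ≤ eVariationOn φ (Icc 0 a) + (ENNReal.ofReal (η/4) + ENNReal.ofReal (η/2)) := by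
    calc A = (A - ENNReal.ofReal (η/2)) + ENNReal.ofReal (η/2) :=
          (tsub_add_cancel_of_le hcη).symm
      _ ≤ (eVariationOn φ (Icc 0 a) + ENNReal.ofReal (η/4)) + ENNReal.ofReal (η/2) := by
          gcongr
      _ = _ := by rw [add_assoc]
  rw [← hadd] at hle3
  have hfinal : eVariationOn φ (Icc a x) ≤ ENNReal.ofReal (η/4) + ENNReal.ofReal (η/2) :=
    (ENNReal.add_le_add_iff_left hfa).1 hle3
  refine ⟨a, ha0, ha_lt, le_trans hfinal ?_⟩
  rw [← ENNReal.ofReal_add (by linarith) (by linarith)]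
  exact ENNReal.ofReal_le_ofReal (by linarith)

private lemma TVA_Vdiff {d : ℕ} {φ : ℝ → RSDE.E d} {T : ℝ}
    (hbv : BoundedVariationOn φ (Icc 0 T)) {x y : ℝ} (hx : 0 ≤ x) (hxy : x ≤ y) (hyT : y ≤ T) :
    (eVariationOn φ (Icc x y)).toReal
      = (eVariationOn φ (Icc 0 y)).toReal - (eVariationOn φ (Icc 0 x)).toReal := by
  have hadd : eVariationOn φ (Icc 0 x) + eVariationOn φ (Icc x y) = eVariationOn φ (Icc 0 y) := by
    have := eVariationOn.Icc_add_Icc φ (s := Set.univ) hx hxy (Set.mem_univ _)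
    simpa using this
  have h1 : eVariationOn φ (Icc 0 x) ≠ ⊤ := fun h =>
    hbv (eq_top_iff.2 (h ▸ eVariationOn.mono φ (Icc_subset_Icc le_rfl (le_trans hxy hyT))))
  have h2 : eVariationOn φ (Icc x y) ≠ ⊤ := fun h =>
    hbv (eq_top_iff.2 (h ▸ eVariationOn.mono φ (Icc_subset_Icc hx hyT)))
  rw [← hadd, ENNReal.toReal_add h1 h2]
  ring

private lemma TVA_Vcont {d : ℕ} {φ : ℝ → RSDE.E d} {T : ℝ} {μ : Measure ℝ} [IsFiniteMeasure μ]
    (hcont : ContinuousOn φ (Icc 0 T)) (hbv : BoundedVariationOn φ (Icc 0 T))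
    (hμV : ∀ r ∈ Icc 0 T, μ (Icc 0 r) = eVariationOn φ (Icc 0 r)) :
    ContinuousOn (fun r => (eVariationOn φ (Icc 0 r)).toReal) (Icc 0 T) := by
  set V : ℝ → ℝ := fun r => (eVariationOn φ (Icc 0 r)).toReal with hV
  intro x hx
  rw [Metric.continuousWithinAt_iff]
  intro ε hε
  have hleft : ∃ aa : ℝ, aa < x ∧ ∀ y ∈ Icc 0 T, aa < y → y ≤ x → dist (V y) (V x) ≤ ε/2 := by
    rcases eq_or_lt_of_le hx.1 with h0 | h0
    · refine ⟨x - 1, by linarith, fun y hy h1 h2 => ?_⟩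
      have hyx : y = x := le_antisymm h2 (h0 ▸ hy.1)
      rw [hyx, dist_self]
      linarith
    · obtain ⟨a, ha0, hax, haV⟩ := TVA_left_small hcont hbv h0 hx.2 (half_pos hε)
      refine ⟨a, hax, fun y hy h1 h2 => ?_⟩
      have hVyx : V x - V y = (eVariationOn φ (Icc y x)).toReal := by
        rw [hV]
        simp only
        rw [TVA_Vdiff hbv hy.1 h2 hx.2]
      have hfin : eVariationOn φ (Icc a x) ≠ ⊤ :=
        ne_top_of_le_ne_top ENNReal.ofReal_ne_top haV
      have hmono' : eVariationOn φ (Icc y x) ≤ eVariationOn φ (Icc a x) :=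
        eVariationOn.mono φ (Icc_subset_Icc (le_of_lt h1) le_rfl)
      have hle : V x - V y ≤ ε/2 := by
        rw [hVyx]
        calc (eVariationOn φ (Icc y x)).toReal ≤ (eVariationOn φ (Icc a x)).toReal :=
              ENNReal.toReal_mono hfin hmono'
          _ ≤ ε/2 := by
              have h5 := ENNReal.toReal_mono ENNReal.ofReal_ne_top haV
              rwa [ENNReal.toReal_ofReal (half_pos hε).le] at h5
      have hnn : 0 ≤ V x - V y := by rw [hVyx]; exact ENNReal.toReal_nonneg
      rw [Real.dist_eq, abs_of_nonpos (by linarith)]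
      linarith
  have hright : ∃ bb : ℝ, x < bb ∧ ∀ y ∈ Icc 0 T, x ≤ y → y < bb → dist (V y) (V x) ≤ ε/2 := by
    rcases eq_or_lt_of_le hx.2 with hT' | hT'
    · refine ⟨x + 1, by linarith, fun y hy h1 h2 => ?_⟩
      have hyx : y = x := le_antisymm (hT' ▸ hy.2) h1
      rw [hyx, dist_self]
      linarith
    · have hseq : Tendsto (fun n : ℕ => μ (Ioc x (min T (x + 1/(n+1))))) atTop
          (nhds (μ (⋂ n : ℕ, Ioc x (min T (x + 1/(n+1)))))) := by
        apply tendsto_measure_iInter_atTop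
        · exact fun n => measurableSet_Ioc.nullMeasurableSet
        · intro p q hpq
          apply Ioc_subset_Ioc le_rfl
          apply min_le_min le_rfl
          have : (1:ℝ)/(q+1) ≤ 1/(p+1) := by
            apply one_div_le_one_div_of_le (by positivity)
            exact_mod_cast add_le_add_left (Nat.cast_le.2 hpq) 1
          linarith
        · exact ⟨0, measure_ne_top μ _⟩
      have hempty : (⋂ n : ℕ, Ioc x (min T (x + 1/(n+1)))) = ∅ := by
        ext y
        simp only [mem_iInter, mem_Ioc, mem_empty_iff_false, iff_false, not_forall]
        by_contra hcon
        push_neg at hcon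
        obtain ⟨n, hn⟩ := exists_nat_one_div_lt (sub_pos.2 (hcon 0).1)
        have h6 := le_trans (hcon n).2 (min_le_right _ _)
        have : (1:ℝ)/(n+1) < y - x := by exact_mod_cast hn
        linarith
      rw [hempty, measure_empty] at hseq
      have hev := hseq.eventually_lt_const (ENNReal.ofReal_pos.2 (half_pos hε))
      obtain ⟨n, hn⟩ := hev.exists
      set b := min T (x + 1/(n+1)) with hb
      have hxb : x < b := lt_min hT' (lt_add_of_pos_right x (by positivity))
      refine ⟨b, hxb, fun y hy h1 h2 => ?_⟩
      have hVyx : V y - V x = (eVariationOn φ (Icc x y)).toReal := by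
        rw [hV]; simp only
        rw [TVA_Vdiff hbv hx.1 h1 hy.2]
      have hIoc : eVariationOn φ (Icc x y) = μ (Ioc x y) :=
        (TVA_muIoc hbv hμV hx.1 h1 hy.2).symm
      have hle : V y - V x ≤ ε/2 := by
        rw [hVyx, hIoc]
        calc (μ (Ioc x y)).toReal ≤ (μ (Ioc x b)).toReal := by
              apply ENNReal.toReal_mono (measure_ne_top μ _)
              exact measure_mono (Ioc_subset_Ioc le_rfl (le_of_lt h2))
          _ ≤ ε/2 := by
              have h5 := ENNReal.toReal_mono ENNReal.ofReal_ne_top (le_of_lt hn)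
              rwa [ENNReal.toReal_ofReal (half_pos hε).le] at h5
      have hnn : 0 ≤ V y - V x := by rw [hVyx]; exact ENNReal.toReal_nonneg
      rw [Real.dist_eq, abs_of_nonneg hnn]
      linarith
  obtain ⟨aa, haa, hP⟩ := hleft
  obtain ⟨bb, hbb, hQ⟩ := hright
  refine ⟨min (x - aa) (bb - x), lt_min (by linarith) (by linarith), fun y hy hd => ?_⟩
  rw [Real.dist_eq] at hd
  rcases le_or_gt y x with h | h
  · have h7 : aa < y := by
      have h8 : |y - x| < x - aa := lt_of_lt_of_le hd (min_le_left _ _)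
      have h9 : x - y ≤ |y - x| := by rw [abs_sub_comm]; exact le_abs_self _
      linarith
    exact lt_of_le_of_lt (hP y hy h7 h) (by linarith)
  · have h7 : y < bb := by
      have h8 : |y - x| < bb - x := lt_of_lt_of_le hd (min_le_right _ _)
      have h9 : y - x ≤ |y - x| := le_abs_self _
      linarith
    exact lt_of_le_of_lt (hQ y hy (le_of_lt h) h7) (by linarith)

private lemma TVA_exists_partition {d : ℕ} {φ : ℝ → RSDE.E d} {T : ℝ} {μ : Measure ℝ}
    [IsFiniteMeasure μ]
    (hcont : ContinuousOn φ (Icc 0 T)) (hbv : BoundedVariationOn φ (Icc 0 T))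
    (hμV : ∀ r ∈ Icc 0 T, μ (Icc 0 r) = eVariationOn φ (Icc 0 r))
    {u v ε : ℝ} (hu : 0 ≤ u) (huv : u ≤ v) (hvT : v ≤ T) (hε : 0 < ε) :
    ∃ (m : ℕ) (c : ℕ → ℝ), Monotone c ∧ c 0 = u ∧ c m = v ∧
      (∀ j, j ≤ m → c j ∈ Icc u v) ∧
      ∀ j, j < m → μ (Ioc (c j) (c (j+1))) ≤ ENNReal.ofReal ε := by
  have hVcont := TVA_Vcont hcont hbv hμV
  have hUC := (isCompact_Icc (a := (0:ℝ)) (b := T)).uniformContinuousOn_of_continuous hVcont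
  obtain ⟨δ, hδpos, hδ⟩ := Metric.uniformContinuousOn_iff.1 hUC ε hε
  set m := ⌈(v - u)/δ⌉₊ + 1 with hm
  have hm0 : (0:ℝ) < (m:ℝ) := by
    rw [hm]; push_cast; positivity
  have hmδ : (v - u) / (m:ℝ) < δ := by
    have h1 : (v - u)/δ ≤ (⌈(v - u)/δ⌉₊ : ℝ) := Nat.le_ceil _
    have h2 : ((⌈(v - u)/δ⌉₊ : ℕ) : ℝ) < (m:ℝ) := by
      rw [hm]; push_cast; linarith
    have h3 : (v - u)/δ < (m:ℝ) := lt_of_le_of_lt h1 h2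
    rw [div_lt_iff₀ hm0]
    rw [div_lt_iff₀ hδpos] at h3
    linarith
  have hvu : (0:ℝ) ≤ v - u := by linarith
  set c : ℕ → ℝ := fun j => u + (v - u) * (min j m : ℕ) / m with hc
  have hcmono : Monotone c := by
    intro i j hij
    rw [hc]
    simp only
    gcongr
  have hc0 : c 0 = u := by simp [hc]
  have hcm : c m = v := by
    rw [hc]
    simp only [min_self]
    field_simp
    ring
  have hcmem : ∀ j, j ≤ m → c j ∈ Icc u v := by
    intro j hj
    constructor
    · rw [hc]; simp only
      have : (0:ℝ) ≤ (v - u) * (min j m : ℕ) / m := by positivity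
      linarith
    · calc c j ≤ c m := hcmono hj
        _ = v := hcm
  have hgap : ∀ j, j < m → c (j+1) - c j = (v - u) / m := by
    intro j hj
    rw [hc]
    simp only
    rw [min_eq_left (le_of_lt hj), min_eq_left hj]
    push_cast
    ring
  refine ⟨m, c, hcmono, hc0, hcm, hcmem, fun j hj => ?_⟩
  have hj1 : j + 1 ≤ m := hj
  have hj0 : j ≤ m := le_of_lt hj
  have hcj : c j ∈ Icc u v := hcmem j hj0
  have hcj1 : c (j+1) ∈ Icc u v := hcmem (j+1) hj1
  have h0cj : 0 ≤ c j := le_trans hu hcj.1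
  have hcc : c j ≤ c (j+1) := hcmono (Nat.le_succ j)
  have hcT : c (j+1) ≤ T := le_trans hcj1.2 hvT
  have hfin : eVariationOn φ (Icc (c j) (c (j+1))) ≠ ⊤ := fun h =>
    hbv (eq_top_iff.2 (h ▸ eVariationOn.mono φ (Icc_subset_Icc h0cj hcT)))
  rw [TVA_muIoc hbv hμV h0cj hcc hcT, ← ENNReal.ofReal_toReal hfin]
  apply ENNReal.ofReal_le_ofReal
  have hdist : dist (c (j+1)) (c j) < δ := by
    rw [Real.dist_eq, abs_of_nonneg (by linarith), hgap j hj]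
    exact hmδ
  have hVd := hδ (c (j+1)) ⟨le_trans hu hcj1.1, hcT⟩ (c j)
    ⟨h0cj, le_trans hcj.2 hvT⟩ hdist
  rw [Real.dist_eq] at hVd
  have := TVA_Vdiff hbv h0cj hcc hcT
  rw [this]
  calc (eVariationOn φ (Icc 0 (c (j+1)))).toReal - (eVariationOn φ (Icc 0 (c j))).toReal
      ≤ |(eVariationOn φ (Icc 0 (c (j+1)))).toReal - (eVariationOn φ (Icc 0 (c j))).toReal| :=
        le_abs_self _
    _ ≤ ε := le_of_lt hVd

private lemma TVA_phidiff {d : ℕ} {φ : ℝ → RSDE.E d} {T : ℝ} {μ : Measure ℝ} [IsFiniteMeasure μ]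
    {nv : ℝ → RSDE.E d}
    (hφint : ∀ r ∈ Icc 0 T, φ r = ∫ q in Icc 0 r, nv q ∂μ)
    (hmeas : AEStronglyMeasurable nv (μ.restrict (Icc 0 T)))
    (hnorm : ∀ᵐ q ∂μ, ‖nv q‖ = 1)
    {x y : ℝ} (hx : 0 ≤ x) (hxy : x ≤ y) (hyT : y ≤ T) :
    φ y - φ x = ∫ q in Ioc x y, nv q ∂μ := by
  have hInt : ∀ s : Set ℝ, s ⊆ Icc 0 T → IntegrableOn nv s μ := by
    intro s hs
    constructor
    · exact hmeas.mono_measure (Measure.restrict_mono hs le_rfl)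
    · exact HasFiniteIntegral.of_bounded (C := 1)
        (ae_restrict_of_ae (hnorm.mono fun q hq => le_of_eq hq))
  have hxT : x ≤ T := le_trans hxy hyT
  rw [hφint y ⟨le_trans hx hxy, hyT⟩, hφint x ⟨hx, hxT⟩]
  have hdisj : Disjoint (Icc (0:ℝ) x) (Ioc x y) := by
    rw [Set.disjoint_left]
    intro b hb hb'
    exact absurd hb'.1 (not_lt.2 hb.2)
  have hsplit : Icc 0 y = Icc 0 x ∪ Ioc x y := (Set.Icc_union_Ioc_eq_Icc hx hxy).symm
  rw [hsplit, setIntegral_union hdisj measurableSet_Ioc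
    (hInt _ (Icc_subset_Icc le_rfl hxT))
    (hInt _ (fun z hz => ⟨le_trans hx (le_of_lt hz.1), le_trans hz.2 hyT⟩))]
  abel

private lemma TVA_meas {d : ℕ} {φ : ℝ → RSDE.E d} {T : ℝ} {μ : Measure ℝ} [IsFiniteMeasure μ]
    {nv : ℝ → RSDE.E d} (hT : 0 ≤ T)
    (hcont : ContinuousOn φ (Icc 0 T)) (hbv : BoundedVariationOn φ (Icc 0 T))
    (hμV : ∀ r ∈ Icc 0 T, μ (Icc 0 r) = eVariationOn φ (Icc 0 r))
    (hφint : ∀ r ∈ Icc 0 T, φ r = ∫ q in Icc 0 r, nv q ∂μ) :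
    AEStronglyMeasurable nv (μ.restrict (Icc 0 T)) := by
  by_contra hm
  set S := {r : ℝ | r ∈ Icc 0 T ∧ AEStronglyMeasurable nv (μ.restrict (Icc 0 r))} with hS
  have hμ00 : μ (Icc (0:ℝ) 0) = 0 := by
    rw [hμV 0 ⟨le_rfl, hT⟩]
    exact eVariationOn.subsingleton φ (by rw [Set.Icc_self]; exact Set.subsingleton_singleton)
  have h0S : (0:ℝ) ∈ S := by
    refine ⟨⟨le_rfl, hT⟩, ?_⟩
    rw [Measure.restrict_eq_zero.2 hμ00]
    exact aestronglyMeasurable_zero_measure nv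
  have hSb : BddAbove S := ⟨T, fun r hr => hr.1.2⟩
  set t₀ := sSup S with ht₀
  have ht₀mem : t₀ ∈ Icc 0 T := ⟨le_csSup hSb h0S, csSup_le ⟨0, h0S⟩ (fun r hr => hr.1.2)⟩
  have hatom : μ {t₀} = 0 := by
    rcases eq_or_lt_of_le ht₀mem.1 with h0 | h0
    · apply measure_mono_null ?_ hμ00
      intro z hz
      simp only [mem_singleton_iff] at hz
      rw [hz, ← h0]
      exact ⟨le_rfl, le_rfl⟩
    · by_contra hne
      have hfin : μ {t₀} ≠ ⊤ := measure_ne_top μ _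
      set η := (μ {t₀}).toReal / 2 with hη
      have htr : 0 < (μ {t₀}).toReal := ENNReal.toReal_pos hne hfin
      have hηpos : 0 < η := by rw [hη]; linarith
      obtain ⟨a, ha0, hax, haV⟩ := TVA_left_small hcont hbv h0 ht₀mem.2 hηpos
      have h1 : μ {t₀} ≤ μ (Ioc a t₀) := by
        apply measure_mono
        intro z hz
        simp only [mem_singleton_iff] at hz
        rw [hz]
        exact ⟨hax, le_rfl⟩
      rw [TVA_muIoc hbv hμV ha0 (le_of_lt hax) ht₀mem.2] at h1
      have h2 : μ {t₀} ≤ ENNReal.ofReal η := le_trans h1 haV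
      have h3 : ENNReal.ofReal η < μ {t₀} := by
        conv_rhs => rw [← ENNReal.ofReal_toReal hfin]
        rw [ENNReal.ofReal_lt_ofReal_iff htr, hη]
        linarith
      exact absurd h2 (not_le.2 h3)
  have ht₀meas : AEStronglyMeasurable nv (μ.restrict (Icc 0 t₀)) := by
    have hchoice : ∀ n : ℕ, ∃ r ∈ S, t₀ - 1/(n+1) < r := by
      intro n
      apply exists_lt_of_lt_csSup ⟨0, h0S⟩
      have : (0:ℝ) < 1/(n+1) := by positivity
      linarith
    choose cn hcnS hcnlt using hchoice
    have hcnle : ∀ n, cn n ≤ t₀ := fun n => le_csSup hSb (hcnS n)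
    have hcover : Icc 0 t₀ =ᵐ[μ] ⋃ n : ℕ, Icc 0 (cn n) := by
      rw [ae_eq_set]
      constructor
      · apply measure_mono_null ?_ hatom
        intro z hz
        simp only [mem_diff, mem_iUnion, not_exists, mem_Icc] at hz
        simp only [mem_singleton_iff]
        by_contra hzz
        have hzlt : z < t₀ := lt_of_le_of_ne hz.1.2 hzz
        obtain ⟨n, hn⟩ := exists_nat_one_div_lt (sub_pos.2 hzlt)
        refine hz.2 n ⟨hz.1.1, ?_⟩
        have := hcnlt n
        have hcast : (1:ℝ)/(n+1) < t₀ - z := by exact_mod_cast hn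
        linarith
      · have hsub : (⋃ n, Icc 0 (cn n)) ⊆ Icc 0 t₀ :=
          iUnion_subset fun n => Icc_subset_Icc le_rfl (hcnle n)
        rw [diff_eq_empty.2 hsub]
        exact measure_empty
    rw [Measure.restrict_congr_set hcover]
    exact aestronglyMeasurable_iUnion_iff.2 fun n => (hcnS n).2
  rcases eq_or_lt_of_le ht₀mem.2 with hTT | hTT
  · exact hm (hTT ▸ ht₀meas)
  · have hnot : ∀ r, t₀ < r → r ≤ T → ¬ AEStronglyMeasurable nv (μ.restrict (Icc 0 r)) := by
      intro r h1 h2 hmr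
      have : r ∈ S := ⟨⟨le_trans ht₀mem.1 (le_of_lt h1), h2⟩, hmr⟩
      exact absurd (le_csSup hSb this) (not_le.2 h1)
    have hφ0 : ∀ r, t₀ < r → r ≤ T → φ r = 0 := by
      intro r h1 h2
      rw [hφint r ⟨le_trans ht₀mem.1 (le_of_lt h1), h2⟩]
      apply integral_undef
      intro hI
      exact hnot r h1 h2 hI.aestronglyMeasurable
    have hIoc0 : ∀ r, t₀ < r → r ≤ T → μ (Ioc r T) = 0 := by
      intro r h1 h2
      rw [TVA_muIoc hbv hμV (le_trans ht₀mem.1 (le_of_lt h1)) h2 le_rfl]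
      apply eVariationOn.constant_on
      rintro p ⟨z, hz, rfl⟩ p' ⟨z', hz', rfl⟩
      rw [hφ0 z (lt_of_lt_of_le h1 hz.1) hz.2, hφ0 z' (lt_of_lt_of_le h1 hz'.1) hz'.2]
    have hIocT : μ (Ioc t₀ T) = 0 := by
      have hsub : Ioc t₀ T ⊆ ⋃ n : ℕ, Ioc (min T (t₀ + 1/(n+1))) T := by
        intro z hz
        obtain ⟨n, hn⟩ := exists_nat_one_div_lt (sub_pos.2 hz.1)
        refine mem_iUnion.2 ⟨n, ⟨?_, hz.2⟩⟩
        apply lt_of_le_of_lt (min_le_right _ _)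
        have hcast : (1:ℝ)/(n+1) < z - t₀ := by exact_mod_cast hn
        linarith
      apply measure_mono_null hsub
      apply measure_iUnion_null
      intro n
      refine hIoc0 _ ?_ (min_le_left _ _)
      refine lt_min hTT ?_
      have : (0:ℝ) < 1/(n+1) := by positivity
      linarith
    have hae2 : Icc 0 T =ᵐ[μ] Icc 0 t₀ := by
      rw [ae_eq_set]
      constructor
      · apply measure_mono_null ?_ hIocT
        intro z hz
        simp only [mem_diff, mem_Icc, not_and, not_le] at hz
        exact ⟨hz.2 hz.1.1, hz.1.2⟩
      · rw [diff_eq_empty.2 (Icc_subset_Icc le_rfl ht₀mem.2)]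
        exact measure_empty
    exact hm (by rw [Measure.restrict_congr_set hae2]; exact ht₀meas)

set_option maxHeartbeats 1000000 in
private lemma TVA_energy {d : ℕ} {D : Set (RSDE.E d)} {r₀ T : ℝ} (hA : RSDE.CondA D r₀)
    {w ξ φ : ℝ → RSDE.E d} (hsk : RSDE.IsSkorohod D T w ξ φ)
    (hwbv : BoundedVariationOn w (Icc 0 T))
    {μ : Measure ℝ} [IsFiniteMeasure μ] {nv : ℝ → RSDE.E d}
    (hμV : ∀ r ∈ Icc 0 T, μ (Icc 0 r) = eVariationOn φ (Icc 0 r))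
    (hφint : ∀ r ∈ Icc 0 T, φ r = ∫ q in Icc 0 r, nv q ∂μ)
    (hae : ∀ᵐ q ∂μ, q ∈ Icc 0 T ∧ ξ q ∈ frontier D ∧ nv q ∈ RSDE.normals D (ξ q))
    (hmeas : AEStronglyMeasurable nv (μ.restrict (Icc 0 T)))
    {u v : ℝ} (hu : 0 ≤ u) (huv : u ≤ v) (hvT : v ≤ T)
    (hΦ : μ (Ioc u v) ≤ ENNReal.ofReal (r₀ / 2)) :
    ‖ξ v - ξ u‖ ≤ 4 * (eVariationOn w (Icc u v)).toReal := by
  have hr₀' : 0 < r₀ := hA.1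
  have hbvφ := hsk.bv_phi
  have hIccT : Icc u v ⊆ Icc 0 T := Icc_subset_Icc hu hvT
  have hnorm1 : ∀ᵐ q ∂μ, ‖nv q‖ = 1 := hae.mono fun q hq => TVA_norm_one hq.2.2
  set W := (eVariationOn w (Icc u v)).toReal with hWdef
  set Φ := (μ (Ioc u v)).toReal with hΦdef
  have hWfin : eVariationOn w (Icc u v) ≠ ⊤ := fun h =>
    hwbv (eq_top_iff.2 (h ▸ eVariationOn.mono w hIccT))
  have hW0 : 0 ≤ W := ENNReal.toReal_nonneg
  have hΦ0 : 0 ≤ Φ := ENNReal.toReal_nonneg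
  have hΦle : Φ ≤ r₀/2 := by
    rw [hΦdef]
    exact ENNReal.toReal_le_of_le_ofReal (by linarith) hΦ
  haveI : Nonempty (Icc u v) := ⟨⟨u, le_rfl, huv⟩⟩
  have hξc : ContinuousOn (fun r => ‖ξ r - ξ u‖) (Icc u v) :=
    ((hsk.cont_xi.mono hIccT).sub continuousOn_const).norm
  have hbdd : BddAbove (Set.range (fun r : Icc u v => ‖ξ (r:ℝ) - ξ u‖)) := by
    obtain ⟨C, hC⟩ := (isCompact_Icc.image_of_continuousOn hξc).bddAbove
    refine ⟨C, ?_⟩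
    rintro y ⟨r, rfl⟩
    exact hC ⟨(r:ℝ), r.2, rfl⟩
  set ρ := ⨆ r : Icc u v, ‖ξ (r:ℝ) - ξ u‖ with hρdef
  have hρr : ∀ r, r ∈ Icc u v → ‖ξ r - ξ u‖ ≤ ρ := fun r hr => le_ciSup hbdd ⟨r, hr⟩
  have hρ0 : 0 ≤ ρ := le_trans (norm_nonneg _) (hρr u ⟨le_rfl, huv⟩)
  have hξuD : ξ u ∈ closure D := hsk.mem_closure u ⟨hu, le_trans huv hvT⟩
  have key : ∀ r ∈ Icc u v, ‖ξ r - ξ u‖^2 ≤ 2*ρ*W + ρ^2/r₀ * Φ := by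
    intro r hr
    have hforall : ∀ η : ℝ, 0 < η → ‖ξ r - ξ u‖^2 ≤ 2*ρ*W + ρ^2/r₀ * Φ + η := by
      intro η hη
      have hUC := isCompact_Icc.uniformContinuousOn_of_continuous (hsk.cont_xi.mono hIccT)
      set η' := η / (W + 3*Φ + 1) with hη'def
      have hη'pos : 0 < η' := by rw [hη'def]; positivity
      obtain ⟨δ, hδpos, hδ⟩ := Metric.uniformContinuousOn_iff.1 hUC η' hη'pos
      set n := ⌈(v - u)/δ⌉₊ + 1 with hndef
      have hn0 : (0:ℝ) < (n:ℝ) := by rw [hndef]; push_cast; positivity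
      have hmesh : (v - u)/(n:ℝ) < δ := by
        have h1 : (v - u)/δ ≤ (⌈(v - u)/δ⌉₊ : ℝ) := Nat.le_ceil _
        have h2 : ((⌈(v - u)/δ⌉₊ : ℕ) : ℝ) < (n:ℝ) := by rw [hndef]; push_cast; linarith
        have h3 : (v - u)/δ < (n:ℝ) := lt_of_le_of_lt h1 h2
        rw [div_lt_iff₀ hn0]
        rw [div_lt_iff₀ hδpos] at h3
        linarith
      have hur : u ≤ r := hr.1
      have hrv : r ≤ v := hr.2
      have hru0 : (0:ℝ) ≤ r - u := by linarith
      set a : ℕ → ℝ := fun j => u + (r - u) * (min j n : ℕ) / n with hadef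
      have hamono : Monotone a := by
        intro i j hij
        rw [hadef]
        simp only
        gcongr
      have ha0 : a 0 = u := by simp [hadef]
      have han : a n = r := by
        rw [hadef]
        simp only [min_self]
        field_simp
        ring
      have hamem : ∀ j, a j ∈ Icc u r := by
        intro j
        have hmin : ((min j n : ℕ) : ℝ) ≤ (n:ℝ) := Nat.cast_le.2 (min_le_right j n)
        have hnn : (0:ℝ) ≤ ((min j n : ℕ) : ℝ) := Nat.cast_nonneg _
        constructor
        · rw [hadef]; simp only
          have : (0:ℝ) ≤ (r - u) * (min j n : ℕ) / n := by positivity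
          linarith
        · rw [hadef]; simp only
          have h4 : (r - u) * (min j n : ℕ) / n ≤ (r - u) := by
            rw [div_le_iff₀ hn0]
            nlinarith
          linarith
      have hmemuv : ∀ j, a j ∈ Icc u v := fun j => ⟨(hamem j).1, le_trans (hamem j).2 hrv⟩
      have hmemT : ∀ j, a j ∈ Icc 0 T := fun j => hIccT (hmemuv j)
      have hgap : ∀ j, j < n → a (j+1) - a j = (r - u)/n := by
        intro j hj
        rw [hadef]
        simp only
        rw [min_eq_left hj, min_eq_left (le_of_lt hj)]
        push_cast
        ring
      have hgapmesh : ∀ j, j < n → a (j+1) - a j < δ := by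
        intro j hj
        rw [hgap j hj]
        calc (r - u)/(n:ℝ) ≤ (v - u)/(n:ℝ) := by gcongr
          _ < δ := hmesh
      have e1 : ∑ j ∈ Finset.range n, ‖w (a (j+1)) - w (a j)‖ ≤ W :=
        TVA_sum_norm hamono (fun j _ => hmemuv j) hWfin
      have e2 : ∑ j ∈ Finset.range n, (μ (Ioc (a j) (a (j+1)))).toReal ≤ Φ := by
        rw [← ENNReal.toReal_sum (fun j _ => measure_ne_top μ _), TVA_sum_Ioc hamono n, ha0, han]
        exact ENNReal.toReal_mono (measure_ne_top μ _)
          (measure_mono (Ioc_subset_Ioc le_rfl hrv))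
      set K := η' + ρ^2/(2*r₀) with hKdef
      have hK0 : 0 ≤ K := by rw [hKdef]; positivity
      have hterm : ∀ j ∈ Finset.range n,
          ‖ξ (a (j+1)) - ξ u‖^2 - ‖ξ (a j) - ξ u‖^2 ≤
            (2*ρ + η') * ‖w (a (j+1)) - w (a j)‖
            + (η' + 2*K) * (μ (Ioc (a j) (a (j+1)))).toReal := by
        intro j hjr
        rw [Finset.mem_range] at hjr
        have hpp' : a j ≤ a (j+1) := hamono (Nat.le_succ j)
        have h0p : 0 ≤ a j := (hmemT j).1
        have hp'T : a (j+1) ≤ T := (hmemT (j+1)).2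
        have hsq : ‖ξ (a (j+1)) - ξ u‖^2 - ‖ξ (a j) - ξ u‖^2
            = 2*⟪ξ (a j) - ξ u, ξ (a (j+1)) - ξ (a j)⟫ + ‖ξ (a (j+1)) - ξ (a j)‖^2 := by
          have h := norm_add_sq_real (ξ (a j) - ξ u) (ξ (a (j+1)) - ξ (a j))
          have heq : (ξ (a j) - ξ u) + (ξ (a (j+1)) - ξ (a j)) = ξ (a (j+1)) - ξ u := by abel
          rw [heq] at h
          linarith
        have hdecomp : ξ (a (j+1)) - ξ (a j)
            = (w (a (j+1)) - w (a j)) + (φ (a (j+1)) - φ (a j)) := by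
          rw [hsk.eq_add (a (j+1)) (hmemT (j+1)), hsk.eq_add (a j) (hmemT j)]
          abel
        have hw1 : ⟪ξ (a j) - ξ u, w (a (j+1)) - w (a j)⟫ ≤ ρ * ‖w (a (j+1)) - w (a j)‖ :=
          le_trans (real_inner_le_norm _ _)
            (mul_le_mul_of_nonneg_right (hρr _ (hmemuv j)) (norm_nonneg _))
        have hφn : ‖φ (a (j+1)) - φ (a j)‖ ≤ (μ (Ioc (a j) (a (j+1)))).toReal := by
          have hev := eVariationOn.edist_le φ (x := a (j+1)) (y := a j)
            (show a (j+1) ∈ Icc (a j) (a (j+1)) from ⟨hpp', le_rfl⟩)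
            (show a j ∈ Icc (a j) (a (j+1)) from ⟨le_rfl, hpp'⟩)
          rw [← TVA_muIoc hbvφ hμV h0p hpp' hp'T] at hev
          have h1 : dist (φ (a (j+1))) (φ (a j)) ≤ (μ (Ioc (a j) (a (j+1)))).toReal := by
            rw [dist_edist]
            exact ENNReal.toReal_mono (measure_ne_top μ _) hev
          rwa [dist_eq_norm] at h1
        have hΔξ : ‖ξ (a (j+1)) - ξ (a j)‖ ≤ η' := by
          have hd : dist (a (j+1)) (a j) < δ := by
            rw [Real.dist_eq, abs_of_nonneg (by linarith)]
            exact hgapmesh j hjr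
          have h5 := hδ _ (hmemuv (j+1)) _ (hmemuv j) hd
          rw [dist_eq_norm] at h5
          linarith
        have hΔξsq : ‖ξ (a (j+1)) - ξ (a j)‖^2
            ≤ η' * (‖w (a (j+1)) - w (a j)‖ + (μ (Ioc (a j) (a (j+1)))).toReal) := by
          have hsplit : ‖ξ (a (j+1)) - ξ (a j)‖
              ≤ ‖w (a (j+1)) - w (a j)‖ + ‖φ (a (j+1)) - φ (a j)‖ := by
            rw [hdecomp]
            exact norm_add_le _ _
          calc ‖ξ (a (j+1)) - ξ (a j)‖^2 = ‖ξ (a (j+1)) - ξ (a j)‖ * ‖ξ (a (j+1)) - ξ (a j)‖ :=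
                sq (‖ξ (a (j+1)) - ξ (a j)‖) ▸ (by ring)
            _ ≤ η' * (‖w (a (j+1)) - w (a j)‖ + (μ (Ioc (a j) (a (j+1)))).toReal) :=
                mul_le_mul hΔξ (le_trans hsplit (add_le_add le_rfl hφn)) (norm_nonneg _)
                  (le_of_lt hη'pos)
        have hIntIoc : IntegrableOn nv (Ioc (a j) (a (j+1))) μ := by
          constructor
          · exact hmeas.mono_measure (Measure.restrict_mono
              (Set.Ioc_subset_Icc_self.trans (Icc_subset_Icc h0p hp'T)) le_rfl)
          · exact HasFiniteIntegral.of_bounded (C := 1)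
              (ae_restrict_of_ae (hnorm1.mono fun q hq => le_of_eq hq))
        have hΔφ : φ (a (j+1)) - φ (a j) = ∫ q in Ioc (a j) (a (j+1)), nv q ∂μ :=
          TVA_phidiff hφint hmeas hnorm1 h0p hpp' hp'T
        have hinner : ⟪ξ (a j) - ξ u, φ (a (j+1)) - φ (a j)⟫
            = ∫ q in Ioc (a j) (a (j+1)), ⟪ξ (a j) - ξ u, nv q⟫ ∂μ := by
          rw [hΔφ]
          exact (integral_inner hIntIoc _).symm
        have haeK : ∀ᵐ q ∂(μ.restrict (Ioc (a j) (a (j+1)))), ⟪ξ (a j) - ξ u, nv q⟫ ≤ K := by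
          filter_upwards [ae_restrict_mem measurableSet_Ioc, ae_restrict_of_ae hae]
            with q hq1 hq2
          have hqmem : q ∈ Icc u v :=
            ⟨le_trans (hmemuv j).1 (le_of_lt hq1.1), le_trans hq1.2 (hmemuv (j+1)).2⟩
          have hsplit2 : ⟪ξ (a j) - ξ u, nv q⟫
              = ⟪ξ (a j) - ξ q, nv q⟫ + ⟪ξ q - ξ u, nv q⟫ := by
            rw [← inner_add_left]
            congr 1
            abel
          have h1 : ⟪ξ (a j) - ξ q, nv q⟫ ≤ η' := by
            have hdq : dist (a j) q < δ := by
              have hg := hgapmesh j hjr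
              rw [Real.dist_eq, abs_of_nonpos (by linarith [hq1.1.le])]
              linarith [hq1.2]
            have hd2 := hδ _ (hmemuv j) q hqmem hdq
            rw [dist_eq_norm] at hd2
            calc ⟪ξ (a j) - ξ q, nv q⟫ ≤ ‖ξ (a j) - ξ q‖ * ‖nv q‖ := real_inner_le_norm _ _
              _ = ‖ξ (a j) - ξ q‖ := by rw [TVA_norm_one hq2.2.2, mul_one]
              _ ≤ η' := le_of_lt hd2
          have h2 : ⟪ξ q - ξ u, nv q⟫ ≤ ρ^2/(2*r₀) := by
            have hsphere := TVA_sphere hA hq2.2.1 hq2.2.2 hξuD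
            have hb := hρr q hqmem
            have hnn : ‖ξ u - ξ q‖ = ‖ξ q - ξ u‖ := norm_sub_rev _ _
            have hsq2 : ‖ξ q - ξ u‖^2 ≤ ρ^2 := by nlinarith [norm_nonneg (ξ q - ξ u)]
            rw [hnn] at hsphere
            have hflip : ⟪ξ q - ξ u, nv q⟫ = -⟪ξ u - ξ q, nv q⟫ := by
              rw [show ξ q - ξ u = -(ξ u - ξ q) by abel, inner_neg_left]
            rw [hflip, le_div_iff₀ (by linarith : (0:ℝ) < 2*r₀)]
            nlinarith [hsphere]
          rw [hsplit2, hKdef]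
          linarith
        have hIK : Integrable (fun q => ⟪ξ (a j) - ξ u, nv q⟫)
            (μ.restrict (Ioc (a j) (a (j+1)))) := hIntIoc.const_inner _
        have hφinner : ⟪ξ (a j) - ξ u, φ (a (j+1)) - φ (a j)⟫
            ≤ K * (μ (Ioc (a j) (a (j+1)))).toReal := by
          rw [hinner]
          calc ∫ q in Ioc (a j) (a (j+1)), ⟪ξ (a j) - ξ u, nv q⟫ ∂μ
              ≤ ∫ _ in Ioc (a j) (a (j+1)), K ∂μ :=
                integral_mono_ae hIK (integrable_const K) haeK
            _ = K * (μ (Ioc (a j) (a (j+1)))).toReal := by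
                rw [setIntegral_const, smul_eq_mul, mul_comm, measureReal_def]
        have hinner_split : ⟪ξ (a j) - ξ u, ξ (a (j+1)) - ξ (a j)⟫ =
            ⟪ξ (a j) - ξ u, w (a (j+1)) - w (a j)⟫
            + ⟪ξ (a j) - ξ u, φ (a (j+1)) - φ (a j)⟫ := by
          rw [hdecomp, inner_add_right]
        rw [hsq, hinner_split]
        linarith
      have htel : ∑ j ∈ Finset.range n, (‖ξ (a (j+1)) - ξ u‖^2 - ‖ξ (a j) - ξ u‖^2)
          = ‖ξ r - ξ u‖^2 := by
        rw [Finset.sum_range_sub (fun j => ‖ξ (a j) - ξ u‖^2) n, ha0, han]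
        simp
      have hsumtot : ‖ξ r - ξ u‖^2 ≤ (2*ρ + η') * W + (η' + 2*K) * Φ := by
        rw [← htel]
        calc ∑ j ∈ Finset.range n, (‖ξ (a (j+1)) - ξ u‖^2 - ‖ξ (a j) - ξ u‖^2)
            ≤ ∑ j ∈ Finset.range n, ((2*ρ + η') * ‖w (a (j+1)) - w (a j)‖
                + (η' + 2*K) * (μ (Ioc (a j) (a (j+1)))).toReal) := Finset.sum_le_sum hterm
          _ = (2*ρ + η') * (∑ j ∈ Finset.range n, ‖w (a (j+1)) - w (a j)‖)
              + (η' + 2*K) * (∑ j ∈ Finset.range n, (μ (Ioc (a j) (a (j+1)))).toReal) := by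
              rw [Finset.sum_add_distrib, ← Finset.mul_sum, ← Finset.mul_sum]
          _ ≤ (2*ρ + η') * W + (η' + 2*K) * Φ := by
              apply add_le_add
              · exact mul_le_mul_of_nonneg_left e1 (by linarith)
              · exact mul_le_mul_of_nonneg_left e2 (by linarith)
      have hη'eq : η' * (W + 3*Φ + 1) = η := by
        rw [hη'def]
        field_simp
      rw [hKdef] at hsumtot
      have hexp : (2*ρ + η') * W + (η' + 2*(η' + ρ^2/(2*r₀))) * Φ
          = 2*ρ*W + ρ^2/r₀*Φ + η'*(W + 3*Φ) := by
        field_simp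
        ring
      rw [hexp] at hsumtot
      have h6 : η'*(W + 3*Φ) ≤ η := by nlinarith
      linarith
    by_contra hc
    push_neg at hc
    have h7 := hforall ((‖ξ r - ξ u‖^2 - (2*ρ*W + ρ^2/r₀ * Φ))/2) (by linarith)
    linarith
  have hS0 : (0:ℝ) ≤ 2*ρ*W + ρ^2/2 := by positivity
  have hkey2 : ∀ r ∈ Icc u v, ‖ξ r - ξ u‖^2 ≤ 2*ρ*W + ρ^2/2 := by
    intro r hr
    refine le_trans (key r hr) ?_
    have h1 : ρ^2/r₀ * Φ ≤ ρ^2/r₀ * (r₀/2) :=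
      mul_le_mul_of_nonneg_left hΦle (div_nonneg (sq_nonneg ρ) hr₀'.le)
    have h2 : ρ^2/r₀ * (r₀/2) = ρ^2/2 := by
      field_simp
    linarith
  have hρle : ρ ≤ Real.sqrt (2*ρ*W + ρ^2/2) := by
    rw [hρdef]
    apply ciSup_le
    rintro ⟨r, hr⟩
    exact (Real.le_sqrt (norm_nonneg _) hS0).2 (hkey2 r hr)
  have hρsq : ρ^2 ≤ 2*ρ*W + ρ^2/2 := by
    have h := pow_le_pow_left₀ hρ0 hρle 2
    rwa [Real.sq_sqrt hS0] at h
  have hρW : ρ ≤ 4*W := by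
    rcases eq_or_lt_of_le hρ0 with h | h
    · rw [← h]; linarith
    · nlinarith
  calc ‖ξ v - ξ u‖ ≤ ρ := hρr v ⟨huv, le_rfl⟩
    _ ≤ 4 * W := hρW


set_option maxHeartbeats 1000000

/-- **Total variation estimate for the reflected path** (Lemma 2.3). Under condition (A),
if `w` is a continuous path of bounded variation whose Skorohod problem has a solution
`(ξ, φ)`, then `‖ξ‖_{[s,t]} ≤ 2(√2 + 1)‖w‖_{[s,t]}`. -/
theorem tv_xi_le_tv_w {d : ℕ} (D : Set (RSDE.E d)) (hDne : D.Nonempty)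
    (hDopen : IsOpen D) (r₀ : ℝ) (hA : RSDE.CondA D r₀)
    (T : ℝ) (hT : 0 ≤ T) (w ξ φ : ℝ → RSDE.E d)
    (hw : ContinuousOn w (Icc 0 T)) (hwbv : BoundedVariationOn w (Icc 0 T))
    (hw0 : w 0 ∈ closure D) (hsk : RSDE.IsSkorohod D T w ξ φ) :
    ∀ s t : ℝ, 0 ≤ s → s ≤ t → t ≤ T →
      RSDE.tv ξ s t ≤ 2 * (Real.sqrt 2 + 1) * RSDE.tv w s t := by
  intro s t hs hst htT
  obtain ⟨μ, nv, hμfin, hμV, hφint, hae⟩ := hsk.reflection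
  haveI := hμfin
  have hr₀ : 0 < r₀ := hA.1
  have hbvφ := hsk.bv_phi
  have hcontφ := hsk.cont_phi
  have hmeas : AEStronglyMeasurable nv (μ.restrict (Icc 0 T)) :=
    TVA_meas hT hcontφ hbvφ hμV hφint
  have hpair : ∀ p q : ℝ, 0 ≤ p → p ≤ q → q ≤ T →
      ‖ξ q - ξ p‖ ≤ 4 * (eVariationOn w (Icc p q)).toReal := by
    intro p q hp hpq hqT
    obtain ⟨m, c, hcmono, hc0, hcm, hcmem, hcsmall⟩ :=
      TVA_exists_partition hcontφ hbvφ hμV hp hpq hqT (half_pos hr₀)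
    have hwfinpq : eVariationOn w (Icc p q) ≠ ⊤ := fun h =>
      hwbv (eq_top_iff.2 (h ▸ eVariationOn.mono w (Icc_subset_Icc hp hqT)))
    have h1 : dist (ξ (c 0)) (ξ (c m)) ≤ ∑ j ∈ Finset.range m, dist (ξ (c j)) (ξ (c (j+1))) :=
      dist_le_range_sum_dist (fun j => ξ (c j)) m
    have h2 : ∀ j ∈ Finset.range m, dist (ξ (c j)) (ξ (c (j+1)))
        ≤ 4 * (eVariationOn w (Icc (c j) (c (j+1)))).toReal := by
      intro j hj
      rw [Finset.mem_range] at hj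
      rw [dist_comm, dist_eq_norm]
      exact TVA_energy hA hsk hwbv hμV hφint hae hmeas
        (le_trans hp (hcmem j (le_of_lt hj)).1) (hcmono (Nat.le_succ j))
        (le_trans (hcmem (j+1) hj).2 hqT) (hcsmall j hj)
    have h3 : ∑ j ∈ Finset.range m, (eVariationOn w (Icc (c j) (c (j+1)))).toReal
        ≤ (eVariationOn w (Icc p q)).toReal := by
      have hch := TVA_chain w hcmono m
      rw [hc0, hcm] at hch
      have hfin2 : ∀ j ∈ Finset.range m, eVariationOn w (Icc (c j) (c (j+1))) ≠ ⊤ := by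
        intro j hj
        rw [Finset.mem_range] at hj
        exact fun h => hwfinpq (eq_top_iff.2 (h ▸ eVariationOn.mono w
          (Icc_subset_Icc (hcmem j (le_of_lt hj)).1 (hcmem (j+1) hj).2)))
      rw [← ENNReal.toReal_sum hfin2]
      exact ENNReal.toReal_mono hwfinpq hch
    calc ‖ξ q - ξ p‖ = dist (ξ (c 0)) (ξ (c m)) := by rw [hc0, hcm, dist_comm, dist_eq_norm]
      _ ≤ ∑ j ∈ Finset.range m, dist (ξ (c j)) (ξ (c (j+1))) := h1
      _ ≤ ∑ j ∈ Finset.range m, 4 * (eVariationOn w (Icc (c j) (c (j+1)))).toReal :=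
          Finset.sum_le_sum h2
      _ = 4 * ∑ j ∈ Finset.range m, (eVariationOn w (Icc (c j) (c (j+1)))).toReal := by
          rw [Finset.mul_sum]
      _ ≤ 4 * (eVariationOn w (Icc p q)).toReal := by linarith
  have hwst_fin : eVariationOn w (Icc s t) ≠ ⊤ := fun h =>
    hwbv (eq_top_iff.2 (h ▸ eVariationOn.mono w (Icc_subset_Icc hs htT)))
  have hfin : eVariationOn ξ (Icc s t) ≤ ENNReal.ofReal (4 * RSDE.tv w s t) := by
    refine iSup_le ?_
    rintro ⟨n, ⟨q, hq, hqs⟩⟩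
    have hper : ∀ i ∈ Finset.range n, edist (ξ (q (i+1))) (ξ (q i))
        ≤ ENNReal.ofReal (4 * (eVariationOn w (Icc (q i) (q (i+1)))).toReal) := by
      intro i _
      rw [edist_dist, dist_eq_norm]
      apply ENNReal.ofReal_le_ofReal
      exact hpair (q i) (q (i+1)) (le_trans hs (hqs i).1) (hq (Nat.le_succ i))
        (le_trans (hqs (i+1)).2 htT)
    calc ∑ i ∈ Finset.range n, edist (ξ (q (i+1))) (ξ (q i))
        ≤ ∑ i ∈ Finset.range n,
            ENNReal.ofReal (4 * (eVariationOn w (Icc (q i) (q (i+1)))).toReal) :=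
          Finset.sum_le_sum hper
      _ = ENNReal.ofReal (∑ i ∈ Finset.range n,
            4 * (eVariationOn w (Icc (q i) (q (i+1)))).toReal) :=
          (ENNReal.ofReal_sum_of_nonneg (fun i _ => by positivity)).symm
      _ ≤ ENNReal.ofReal (4 * RSDE.tv w s t) := by
          apply ENNReal.ofReal_le_ofReal
          rw [← Finset.mul_sum]
          have hch := TVA_chain w hq n
          have hmono2 : eVariationOn w (Icc (q 0) (q n)) ≤ eVariationOn w (Icc s t) :=
            eVariationOn.mono w (Icc_subset_Icc (hqs 0).1 (hqs n).2)
          have hfin2 : ∀ i ∈ Finset.range n, eVariationOn w (Icc (q i) (q (i+1))) ≠ ⊤ := by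
            intro i _
            exact fun h => hwst_fin (eq_top_iff.2 (h ▸ eVariationOn.mono w
              (Icc_subset_Icc (hqs i).1 (hqs (i+1)).2)))
          have h4 : ∑ i ∈ Finset.range n, (eVariationOn w (Icc (q i) (q (i+1)))).toReal
              ≤ RSDE.tv w s t := by
            rw [← ENNReal.toReal_sum hfin2]
            exact ENNReal.toReal_mono hwst_fin (le_trans hch hmono2)
          linarith
  have htvw0 : (0:ℝ) ≤ RSDE.tv w s t := ENNReal.toReal_nonneg
  have htv : RSDE.tv ξ s t ≤ 4 * RSDE.tv w s t := by
    have h5 := ENNReal.toReal_mono ENNReal.ofReal_ne_top hfin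
    rw [ENNReal.toReal_ofReal (by linarith)] at h5
    exact h5
  have hsqrt : (4:ℝ) ≤ 2*(Real.sqrt 2 + 1) := by
    nlinarith [Real.sq_sqrt (by norm_num : (0:ℝ) ≤ 2), Real.sqrt_nonneg 2]
  nlinarith [htv, hsqrt, htvw0]
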